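/- arXiv:2502.02989 — 2 statements merged into one kernel-verified Lean document; each statement's English description precedes it below -/
import Mathlib

section
/- Let Ω ⊂ ℝⁿ be a bounded domain whose boundary ∂Ω is Minkowski nondegenerate of dimension d ∈ (n−1, n) relative to Ω, i.e., 0 < liminf_{r→0} μ(∂Ω, r)/r^{n-d} ≤ limsup_{r→0} μ(∂Ω, r)/r^{n-d} < ∞. Suppose the heat content N(t) satisfies c₁ μ(∂Ω, c₂√t) ≤ N(t) ≤ c₃ t^{-1} ∫₀^∞ e^{-r²/(8t)} r μ(∂Ω, r) dr for all t > 0, with positive constants c₁, c₂, c₃. Then there exist constants c > 0 and t₀ > 0 such that c^{-1} t^{(n-d)/2} ≤ N(t) ≤ c t^{(n-d)/2} for all 0 < t ≤ t₀. -/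
open MeasureTheory Metric Filter

/-- Interior Minkowski sausage volume of a domain. -/
noncomputable def sausage {n : ℕ} (Ω : Set (EuclideanSpace ℝ (Fin n))) (r : ℝ) : ℝ :=
  (volume {x | x ∈ Ω ∧ infDist x (frontier Ω) < r}).toReal

/-- if ∂Ω is Minkowski nondegenerate of dimension d ∈ (n−1, n) relative
to Ω, and the heat content N(t) satisfies the two-sided integral bounds
c₁ μ(∂Ω, c₂√t) ≤ N(t) ≤ c₃ t⁻¹ ∫₀^∞ e^{−r²/(8t)} r μ(∂Ω, r) dr, then
c⁻¹ t^{(n−d)/2} ≤ N(t) ≤ c t^{(n−d)/2} for small t. -/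
theorem heat_content_power_law {n : ℕ}
    (Ω : Set (EuclideanSpace ℝ (Fin n))) (hΩopen : IsOpen Ω)
    (hΩconn : IsConnected Ω) (hΩbdd : Bornology.IsBounded Ω)
    (d : ℝ) (hd₁ : (n : ℝ) - 1 < d) (hd₂ : d < n)
    -- Minkowski nondegeneracy: 0 < liminf ≤ limsup < ∞
    (hliminf : 0 < liminf (fun r : ℝ => sausage Ω r / r ^ ((n : ℝ) - d))
      (nhdsWithin 0 (Set.Ioi 0)))
    (hlimsup : IsBoundedUnder (· ≤ ·) (nhdsWithin 0 (Set.Ioi 0))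
      (fun r : ℝ => sausage Ω r / r ^ ((n : ℝ) - d)))
    (N : ℝ → ℝ) (c₁ c₂ c₃ : ℝ) (hc₁ : 0 < c₁) (hc₂ : 0 < c₂) (hc₃ : 0 < c₃)
    (hlow : ∀ t : ℝ, 0 < t → c₁ * sausage Ω (c₂ * Real.sqrt t) ≤ N t)
    (hup : ∀ t : ℝ, 0 < t → N t ≤
      c₃ * t⁻¹ * ∫ r in Set.Ioi (0 : ℝ), Real.exp (-(r ^ 2) / (8 * t)) * r * sausage Ω r) :
    ∃ c : ℝ, 0 < c ∧ ∃ t₀ : ℝ, 0 < t₀ ∧ ∀ t : ℝ, 0 < t → t ≤ t₀ →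
      c⁻¹ * t ^ (((n : ℝ) - d) / 2) ≤ N t ∧ N t ≤ c * t ^ (((n : ℝ) - d) / 2) := by
  set α : ℝ := (n : ℝ) - d with hαdef
  have hα0 : 0 < α := by simp only [hαdef]; linarith
  -- basic sausage facts
  have hV : volume Ω < ⊤ := hΩbdd.measure_lt_top
  set V : ℝ := (volume Ω).toReal with hVdef
  have hVnn : 0 ≤ V := ENNReal.toReal_nonneg
  have hsnn : ∀ r, 0 ≤ sausage Ω r := fun r => ENNReal.toReal_nonneg
  have hsle : ∀ r, sausage Ω r ≤ V := by
    intro r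
    exact ENNReal.toReal_mono hV.ne (measure_mono fun x hx => hx.1)
  have hmono : Monotone (sausage Ω) := by
    intro r s hrs
    refine ENNReal.toReal_mono ?_ (measure_mono fun x hx => ⟨hx.1, lt_of_lt_of_le hx.2 hrs⟩)
    exact ((measure_mono (fun x hx => hx.1 : _ ⊆ Ω)).trans_lt hV).ne
  -- extract eventual two-sided bounds on the relative sausage volume
  obtain ⟨b, hbev⟩ : ∃ b : ℝ, ∀ᶠ r in nhdsWithin (0:ℝ) (Set.Ioi 0),
      sausage Ω r / r ^ α ≤ b := by
    obtain ⟨b, hb⟩ := hlimsup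
    exact ⟨b, eventually_map.mp hb⟩
  set L := liminf (fun r : ℝ => sausage Ω r / r ^ α) (nhdsWithin 0 (Set.Ioi 0)) with hLdef
  have hbdd : IsBoundedUnder (· ≥ ·) (nhdsWithin (0:ℝ) (Set.Ioi 0))
      (fun r : ℝ => sausage Ω r / r ^ α) := by
    refine ⟨0, eventually_map.mpr ?_⟩
    filter_upwards [self_mem_nhdsWithin] with r hr
    exact div_nonneg (hsnn r) (Real.rpow_pos_of_pos hr α).le
  have haev : ∀ᶠ r in nhdsWithin (0:ℝ) (Set.Ioi 0),
      L / 2 < sausage Ω r / r ^ α :=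
    eventually_lt_of_lt_liminf (by linarith [hliminf] : L / 2 < L) hbdd
  set a : ℝ := L / 2 with hadef
  have ha0 : 0 < a := by positivity
  -- extract r₀
  obtain ⟨r₀, hr₀pos, hr₀⟩ : ∃ r₀ : ℝ, 0 < r₀ ∧ ∀ r, 0 < r → r < r₀ →
      a < sausage Ω r / r ^ α ∧ sausage Ω r / r ^ α ≤ b := by
    have hev := haev.and hbev
    rw [eventually_iff, mem_nhdsGT_iff_exists_Ioo_subset] at hev
    obtain ⟨u, hu, hsub⟩ := hev
    exact ⟨u, hu, fun r hr hru => hsub ⟨hr, hru⟩⟩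
  -- pointwise bounds
  have hlower : ∀ r, 0 < r → r < r₀ → a * r ^ α ≤ sausage Ω r := by
    intro r hr hrr
    have := (hr₀ r hr hrr).1
    have hrα : (0:ℝ) < r ^ α := Real.rpow_pos_of_pos hr α
    calc a * r ^ α ≤ (sausage Ω r / r ^ α) * r ^ α := by
          exact mul_le_mul_of_nonneg_right this.le hrα.le
      _ = sausage Ω r := div_mul_cancel₀ _ hrα.ne'
  set B : ℝ := max b (V / r₀ ^ α) with hBdef
  have hr₀α : (0:ℝ) < r₀ ^ α := Real.rpow_pos_of_pos hr₀pos α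
  have hupper : ∀ r, 0 < r → sausage Ω r ≤ B * r ^ α := by
    intro r hr
    have hrα : (0:ℝ) < r ^ α := Real.rpow_pos_of_pos hr α
    rcases lt_or_ge r r₀ with h | h
    · have := (hr₀ r hr h).2
      calc sausage Ω r = (sausage Ω r / r ^ α) * r ^ α := (div_mul_cancel₀ _ hrα.ne').symm
        _ ≤ b * r ^ α := mul_le_mul_of_nonneg_right this hrα.le
        _ ≤ B * r ^ α := mul_le_mul_of_nonneg_right (le_max_left _ _) hrα.le
    · have h1 : sausage Ω r ≤ V := hsle r
      have h2 : V = (V / r₀ ^ α) * r₀ ^ α := (div_mul_cancel₀ _ hr₀α.ne').symm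
      have h3 : r₀ ^ α ≤ r ^ α := Real.rpow_le_rpow hr₀pos.le h hα0.le
      have h4 : (0:ℝ) ≤ V / r₀ ^ α := div_nonneg hVnn hr₀α.le
      calc sausage Ω r ≤ V := h1
        _ = (V / r₀ ^ α) * r₀ ^ α := h2
        _ ≤ (V / r₀ ^ α) * r ^ α := mul_le_mul_of_nonneg_left h3 h4
        _ ≤ B * r ^ α := mul_le_mul_of_nonneg_right (le_max_right _ _) hrα.le
  have hB0 : 0 < B := by
    have := hlower (r₀/2) (by positivity) (by linarith)
    have h2 := hupper (r₀/2) (by positivity)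
    have hrα : (0:ℝ) < (r₀/2) ^ α := Real.rpow_pos_of_pos (by positivity) α
    nlinarith [Real.rpow_pos_of_pos (show (0:ℝ) < r₀/2 by positivity) α]
  -- constants
  set Clo : ℝ := c₁ * a * c₂ ^ α with hClodef
  have hClopos : 0 < Clo := by
    have : (0:ℝ) < c₂ ^ α := Real.rpow_pos_of_pos hc₂ α
    positivity
  set G : ℝ := Real.Gamma ((α + 2) / 2) with hGdef
  have hGpos : 0 < G := Real.Gamma_pos_of_pos (by positivity)
  set Cup : ℝ := c₃ * B * (8 : ℝ) ^ ((α + 2) / 2) * ((1/2) * G) with hCupdef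
  have hCuppos : 0 < Cup := by
    have : (0:ℝ) < (8:ℝ) ^ ((α + 2) / 2) := Real.rpow_pos_of_pos (by norm_num) _
    positivity
  refine ⟨max Clo⁻¹ Cup, lt_of_lt_of_le (inv_pos.mpr hClopos) (le_max_left _ _),
    (r₀ / c₂) ^ 2 / 4, by positivity, fun t ht htle => ?_⟩
  have htα : (0:ℝ) < t ^ (α / 2) := Real.rpow_pos_of_pos ht _
  -- lower bound
  have hsqrt : Real.sqrt t ≤ r₀ / c₂ / 2 := by
    rw [show r₀ / c₂ / 2 = Real.sqrt ((r₀/c₂)^2/4) by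
      rw [show (r₀/c₂)^2/4 = (r₀/c₂/2)^2 by ring, Real.sqrt_sq (by positivity)]]
    exact Real.sqrt_le_sqrt htle
  have hc₂t : c₂ * Real.sqrt t < r₀ := by
    have : c₂ * (r₀ / c₂ / 2) < r₀ := by
      rw [show c₂ * (r₀ / c₂ / 2) = r₀ / 2 by field_simp]
      linarith
    nlinarith [Real.sqrt_nonneg t]
  have hc₂tpos : 0 < c₂ * Real.sqrt t := by positivity
  have hlowN : Clo * t ^ (α / 2) ≤ N t := by
    have h1 := hlower _ hc₂tpos hc₂t
    have h2 := hlow t ht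
    have hrw : (c₂ * Real.sqrt t) ^ α = c₂ ^ α * t ^ (α / 2) := by
      rw [Real.mul_rpow hc₂.le (Real.sqrt_nonneg t), Real.sqrt_eq_rpow,
        ← Real.rpow_mul ht.le, show (1:ℝ)/2*α = α/2 by ring]
    rw [hrw] at h1
    calc Clo * t ^ (α/2) = c₁ * (a * (c₂ ^ α * t ^ (α/2))) := by rw [hClodef]; ring
      _ ≤ c₁ * sausage Ω (c₂ * Real.sqrt t) := by
          exact mul_le_mul_of_nonneg_left h1 hc₁.le
      _ ≤ N t := h2
  -- upper bound on the integral
  have h8t : (0:ℝ) < (8 * t)⁻¹ := by positivity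
  have hint : (∫ r in Set.Ioi (0:ℝ), Real.exp (-(r ^ 2) / (8 * t)) * r * sausage Ω r)
      ≤ B * (((8 * t)⁻¹) ^ (-(1 + α + 1) / 2) * (1 / 2) * G) := by
    have hInt : IntegrableOn (fun r : ℝ =>
        B * (r ^ (1 + α) * Real.exp (-(8*t)⁻¹ * r ^ (2:ℝ)))) (Set.Ioi 0) := by
      exact (integrableOn_rpow_mul_exp_neg_mul_rpow (by linarith) two_pos h8t).const_mul B
    have hmle : ∀ r ∈ Set.Ioi (0:ℝ), Real.exp (-(r ^ 2) / (8 * t)) * r * sausage Ω r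
        ≤ B * (r ^ (1 + α) * Real.exp (-(8*t)⁻¹ * r ^ (2:ℝ))) := by
      intro r hr
      rw [Set.mem_Ioi] at hr
      have hexp : Real.exp (-(r ^ 2) / (8 * t)) = Real.exp (-(8*t)⁻¹ * r ^ (2:ℝ)) := by
        rw [Real.rpow_two]
        congr 1
        field_simp
      have hrp : r ^ (1 + α) = r * r ^ α := by
        rw [Real.rpow_add hr, Real.rpow_one]
      rw [hexp, hrp]
      have := hupper r hr
      have hexppos : 0 < Real.exp (-(8*t)⁻¹ * r ^ (2:ℝ)) := Real.exp_pos _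
      calc Real.exp (-(8*t)⁻¹ * r ^ (2:ℝ)) * r * sausage Ω r
          ≤ Real.exp (-(8*t)⁻¹ * r ^ (2:ℝ)) * r * (B * r ^ α) := by
            exact mul_le_mul_of_nonneg_left this (by positivity)
        _ = B * (r * r ^ α * Real.exp (-(8*t)⁻¹ * r ^ (2:ℝ))) := by ring
    have hbound :
        (∫ r in Set.Ioi (0:ℝ), Real.exp (-(r ^ 2) / (8 * t)) * r * sausage Ω r)
        ≤ ∫ r in Set.Ioi (0:ℝ), B * (r ^ (1 + α) * Real.exp (-(8*t)⁻¹ * r ^ (2:ℝ))) := by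
      refine integral_mono_of_nonneg ?_ hInt ?_
      · refine (ae_restrict_iff' measurableSet_Ioi).mpr (ae_of_all _ fun r hr => ?_)
        rw [Set.mem_Ioi] at hr
        have := hsnn r
        positivity
      · exact (ae_restrict_iff' measurableSet_Ioi).mpr (ae_of_all _ hmle)
    refine hbound.trans_eq ?_
    rw [integral_const_mul]
    congr 1
    have := integral_rpow_mul_exp_neg_mul_rpow (p := 2) (q := 1 + α) (b := (8*t)⁻¹)
      two_pos (by linarith) h8t
    simp only [neg_mul] at this ⊢
    rw [this, hGdef, show (α+2)/2 = (1+α+1)/2 by ring]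
  -- convert the value to a power of t
  have hval : ((8 * t)⁻¹) ^ (-(1 + α + 1) / 2) = (8:ℝ) ^ ((α + 2)/2) * (t ^ (α/2) * t) := by
    have h8tnn : (0:ℝ) ≤ 8 * t := by positivity
    rw [show -(1 + α + 1) / 2 = -((α + 2)/2) by ring,
      Real.inv_rpow h8tnn, Real.rpow_neg h8tnn, inv_inv,
      Real.mul_rpow (by norm_num : (0:ℝ) ≤ 8) ht.le,
      show (α + 2)/2 = α/2 + 1 by ring, Real.rpow_add ht, Real.rpow_one]
  have hupN : N t ≤ Cup * t ^ (α / 2) := by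
    have h1 := hup t ht
    have h2 : c₃ * t⁻¹ * (B * (((8 * t)⁻¹) ^ (-(1 + α + 1) / 2) * (1 / 2) * G))
        = Cup * t ^ (α / 2) := by
      rw [hval, hCupdef]
      field_simp
    calc N t ≤ c₃ * t⁻¹ * ∫ r in Set.Ioi (0:ℝ),
          Real.exp (-(r ^ 2) / (8 * t)) * r * sausage Ω r := h1
      _ ≤ c₃ * t⁻¹ * (B * (((8 * t)⁻¹) ^ (-(1 + α + 1) / 2) * (1 / 2) * G)) := by
          exact mul_le_mul_of_nonneg_left hint (by positivity)
      _ = Cup * t ^ (α / 2) := h2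
  constructor
  · have hinv : (max Clo⁻¹ Cup)⁻¹ ≤ Clo := by
      rw [inv_le_comm₀ (lt_of_lt_of_le (inv_pos.mpr hClopos) (le_max_left _ _)) hClopos]
      exact le_max_left _ _
    calc (max Clo⁻¹ Cup)⁻¹ * t ^ (α/2) ≤ Clo * t ^ (α/2) :=
          mul_le_mul_of_nonneg_right hinv htα.le
      _ ≤ N t := hlowN
  · calc N t ≤ Cup * t ^ (α/2) := hupN
      _ ≤ max Clo⁻¹ Cup * t ^ (α/2) :=
          mul_le_mul_of_nonneg_right (le_max_right _ _) htα.le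
end

section
/- Let Ω ⊂ ℝⁿ be open and bounded with ∂Ω = ⋃_{j=1}^M F^{(j)} (closed sets), and let U^{(1)}, …, U^{(M)} ⊂ Ω be pairwise disjoint open sets with U^{(j)} ⊆ closure(π_{∂Ω}^{-1}(F^{(j)})), where π_{∂Ω} is the metric projection onto ∂Ω. Then for every ε > 0 and every j, (∂Ω)(ε) ∩ U^{(j)} = F^{(j)}(ε) ∩ U^{(j)}, where E(ε) denotes the closed ε-parallel set of E. -/
open MeasureTheory Metric

/-- The preimage under the metric projection onto B of a subset B' ⊆ B: the set of
points with a unique nearest point in B, whose nearest point belongs to B'. -/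
def projPreimage {n : ℕ} (B B' : Set (EuclideanSpace ℝ (Fin n))) :
    Set (EuclideanSpace ℝ (Fin n)) :=
  {x | (∃! y, y ∈ B ∧ dist x y = infDist x B) ∧
       ∀ y, y ∈ B → dist x y = infDist x B → y ∈ B'}

/-- if ∂Ω = ⋃ⱼ F⁽ʲ⁾ with F⁽ʲ⁾ closed, and U⁽ʲ⁾ ⊆ Ω are pairwise
disjoint open sets with U⁽ʲ⁾ ⊆ cl(π_{∂Ω}⁻¹(F⁽ʲ⁾)), then inside U⁽ʲ⁾ the parallel
sets of ∂Ω and of the piece F⁽ʲ⁾ coincide: (∂Ω)(ε) ∩ U⁽ʲ⁾ = F⁽ʲ⁾(ε) ∩ U⁽ʲ⁾. -/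
theorem parallel_sets_in_Uj {n M : ℕ} (hM : 0 < M)
    (Ω : Set (EuclideanSpace ℝ (Fin n))) (hΩopen : IsOpen Ω)
    (hΩbdd : Bornology.IsBounded Ω)
    (F : Fin M → Set (EuclideanSpace ℝ (Fin n)))
    (hFclosed : ∀ j, IsClosed (F j))
    (hbd : frontier Ω = ⋃ j, F j)
    (U : Fin M → Set (EuclideanSpace ℝ (Fin n)))
    (hUopen : ∀ j, IsOpen (U j)) (hUsub : ∀ j, U j ⊆ Ω)
    (hUdisj : ∀ j j', j ≠ j' → Disjoint (U j) (U j'))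
    (hUproj : ∀ j, U j ⊆ closure (projPreimage (frontier Ω) (F j))) :
    ∀ ε : ℝ, 0 < ε → ∀ j,
      cthickening ε (frontier Ω) ∩ U j = cthickening ε (F j) ∩ U j := by
  intro ε hε j
  rcases (F j).eq_empty_or_nonempty with hFe | hFne
  · have hPe : projPreimage (frontier Ω) (F j) = ∅ := by
      ext x
      simp only [projPreimage, Set.mem_setOf_eq, Set.mem_empty_iff_false, iff_false, not_and]
      rintro ⟨y, ⟨hyB, hyd⟩, -⟩ h2
      exact absurd (h2 y hyB hyd) (by simp [hFe])
    have hU : U j = ∅ := by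
      have := hUproj j
      rw [hPe, closure_empty] at this
      exact Set.eq_empty_of_subset_empty this
    simp [hU]
  · have hFsub : F j ⊆ frontier Ω := hbd ▸ Set.subset_iUnion F j
    have hbdne : (frontier Ω).Nonempty := hFne.mono hFsub
    have key : ∀ x ∈ U j, infEDist x (frontier Ω) = infEDist x (F j) := by
      intro x hx
      have h1 : infDist x (F j) ≤ infDist x (frontier Ω) := by
        have hcl : ∀ z ∈ projPreimage (frontier Ω) (F j),
            infDist z (F j) ≤ infDist z (frontier Ω) := by
          rintro z ⟨⟨y, ⟨hyB, hyd⟩, -⟩, h2⟩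
          calc infDist z (F j) ≤ dist z y := infDist_le_dist_of_mem (h2 y hyB hyd)
            _ = infDist z (frontier Ω) := hyd
        have hclosed : IsClosed {z : EuclideanSpace ℝ (Fin n) |
            infDist z (F j) ≤ infDist z (frontier Ω)} :=
          isClosed_le (continuous_infDist_pt _) (continuous_infDist_pt _)
        exact closure_minimal (fun z hz => hcl z hz) hclosed (hUproj j hx)
      have h2 : infDist x (frontier Ω) ≤ infDist x (F j) :=
        infDist_le_infDist_of_subset hFsub hFne
      have heq : infDist x (frontier Ω) = infDist x (F j) := le_antisymm h2 h1
      exact (ENNReal.toReal_eq_toReal_iff' (Metric.infEDist_ne_top hbdne)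
        (Metric.infEDist_ne_top hFne)).mp heq
    ext x
    constructor
    · rintro ⟨h1, h2⟩
      refine ⟨?_, h2⟩
      rw [mem_cthickening_iff] at h1 ⊢
      rwa [← key x h2]
    · rintro ⟨h1, h2⟩
      refine ⟨?_, h2⟩
      rw [mem_cthickening_iff] at h1 ⊢
      rwa [key x h2]
end
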